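/- Let biG = (𝒩, ℰ, ℰ′) be a bilevel graph on 𝒩 = {1,…,N} with N ≥ 2, let A_1, …, A_N be maximal monotone operators on a real Hilbert space H with zer(A_1 + ⋯ + A_N) ≠ ∅, and let 𝒜 be the set-valued operator on H^N × H^{N−1} defined by (y, z) ∈ 𝒜(x, v) iff z = (Zᵀ⊗I)x and y ∈ A_1x_1 × ⋯ × A_Nx_N + ((Σ+P)⊗I)x − (Z⊗I)v. Then for (x_1, …, x_N) ∈ H^N there exists v ∈ H^{N−1} such that (0,0) ∈ 𝒜((x_1,…,x_N), v) if and only if x_1 = ⋯ = x_N and the common point x := x_1 satisfies 0 ∈ (A_1 + ⋯ + A_N)x. -/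

import Mathlib

open scoped InnerProductSpace Topology
open Filter

noncomputable section

/-- The simple (undirected) graph induced by a set of directed edges on `Fin N`. -/
def graphOf {N : ℕ} (E : Finset (Fin N × Fin N)) : SimpleGraph (Fin N) where
  Adj i j := i ≠ j ∧ ((i, j) ∈ E ∨ (j, i) ∈ E)
  symm := ⟨fun i j h => ⟨h.1.symm, h.2.symm⟩⟩
  loopless := ⟨fun i h => h.1 rfl⟩

/-- Degree of node `i` in the undirected graph induced by `E`: number of adjacent nodes. -/
def degE {N : ℕ} (E : Finset (Fin N × Fin N)) (i : Fin N) : ℕ :=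
  (Finset.univ.filter (fun j => j ≠ i ∧ ((i, j) ∈ E ∨ (j, i) ∈ E))).card

/-- The graph Laplacian of the graph induced by `E`. -/
def lapE {N : ℕ} (E : Finset (Fin N × Fin N)) : Matrix (Fin N) (Fin N) ℝ :=
  fun i j =>
    if i = j then (degE E i : ℝ)
    else if (i, j) ∈ E ∨ (j, i) ∈ E then -1 else 0

/-- The skew-symmetric matrix `Σ` built from the Laplacian of the base graph. -/
def sigmaE {N : ℕ} (E' : Finset (Fin N × Fin N)) : Matrix (Fin N) (Fin N) ℝ :=
  fun i j => if i < j then -(lapE E' i j) else if j < i then lapE E' i j else 0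

/-- The matrix `P^{ij}`. -/
def pijM (N : ℕ) (i j : Fin N) : Matrix (Fin N) (Fin N) ℝ :=
  fun h k =>
    if h = i ∧ k = i then 1
    else if h = j ∧ k = j then 1
    else if h = j ∧ k = i then -2 else 0

/-- The matrix `P = ∑_{(i,j) ∈ ℰ∖ℰ′} P^{ij}`. -/
def pE {N : ℕ} (E E' : Finset (Fin N × Fin N)) : Matrix (Fin N) (Fin N) ℝ :=
  ∑ e ∈ E \ E', pijM N e.1 e.2

/-- The block operator `Q ⊗ I : H^M → H^N` induced by a matrix `Q ∈ ℝ^{N×M}`. -/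
def matVecH {H : Type*} [NormedAddCommGroup H] [InnerProductSpace ℝ H] {N M : ℕ}
    (Q : Matrix (Fin N) (Fin M) ℝ) (x : Fin M → H) : Fin N → H :=
  fun h => ∑ k, Q h k • x k

/-- `(E, E')` forms a bilevel graph: the state graph `(𝒩, E)` is connected with a topological
ordering, and the base graph `(𝒩, E')` is a connected subgraph. -/
structure IsBilevel {N : ℕ} (E E' : Finset (Fin N × Fin N)) : Prop where
  base_subset : E' ⊆ E
  topo : ∀ e ∈ E, e.1 < e.2
  state_conn : (graphOf E).Connected
  base_conn : (graphOf E').Connected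

/-- `Z` gives an onto decomposition of the Laplacian of the base graph `E'`:
`L = Z Zᵀ` and `ker Zᵀ = span{(1,…,1)}`. -/
def ZOnto {N : ℕ} (E' : Finset (Fin N × Fin N)) (Z : Matrix (Fin N) (Fin (N - 1)) ℝ) : Prop :=
  Z * Z.transpose = lapE E' ∧
  ∀ v : Fin N → ℝ, Z.transpose.mulVec v = 0 ↔ ∃ c : ℝ, v = fun _ => c

/-- The graph-based Douglas–Rachford iteration: `a_i^{k+1} ∈ A_i x_i^{k+1}`,
`(L⊗I)x^{k+1} + ((Σ+P)⊗I)x^{k+1} + σ a^{k+1} = (Z⊗I)w^k` and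
`w^{k+1} = w^k − θ_k (Zᵀ⊗I)x^{k+1}`. -/
structure IsGDR {H : Type*} [NormedAddCommGroup H] [InnerProductSpace ℝ H] {N : ℕ}
    (E E' : Finset (Fin N × Fin N)) (Z : Matrix (Fin N) (Fin (N - 1)) ℝ)
    (A : Fin N → H → Set H) (σ : ℝ) (θ : ℕ → ℝ)
    (x : ℕ → Fin N → H) (a : ℕ → Fin N → H) (w : ℕ → Fin (N - 1) → H) : Prop where
  mem : ∀ k i, a (k + 1) i ∈ A i (x (k + 1) i)
  res : ∀ k, matVecH (lapE E' + sigmaE E' + pE E E') (x (k + 1)) + σ • a (k + 1)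
          = matVecH Z (w k)
  upd : ∀ k, w (k + 1) = w k - θ k • matVecH Z.transpose (x (k + 1))

/-- A set-valued operator on a real inner product space is monotone. -/
def IsMonotoneOp {K : Type*} [NormedAddCommGroup K] [InnerProductSpace ℝ K]
    (A : K → Set K) : Prop :=
  ∀ x y u v : K, u ∈ A x → v ∈ A y → 0 ≤ ⟪u - v, x - y⟫_ℝ

/-- A set-valued operator is maximal monotone. -/
def IsMaxMonotone {K : Type*} [NormedAddCommGroup K] [InnerProductSpace ℝ K]
    (A : K → Set K) : Prop :=
  IsMonotoneOp A ∧ ∀ x u : K, (∀ y v : K, v ∈ A y → 0 ≤ ⟪u - v, x - y⟫_ℝ) → u ∈ A x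

/-- `zer (A_1 + ⋯ + A_N) ≠ ∅`. -/
def SumZerNonempty {H : Type*} [NormedAddCommGroup H] [InnerProductSpace ℝ H] {N : ℕ}
    (A : Fin N → H → Set H) : Prop :=
  ∃ (xs : H) (b : Fin N → H), (∀ i, b i ∈ A i xs) ∧ ∑ i, b i = 0

/-- Weak convergence of a sequence in an inner product space. -/
def WeakLim {K : Type*} [NormedAddCommGroup K] [InnerProductSpace ℝ K]
    (u : ℕ → K) (l : K) : Prop :=
  ∀ h : K, Tendsto (fun k => ⟪u k, h⟫_ℝ) atTop (𝓝 ⟪l, h⟫_ℝ)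

/-- The state variance `Var(x) = (1/N) ∑_i ‖x_i − x̄‖²`. -/
def stateVar {H : Type*} [NormedAddCommGroup H] [InnerProductSpace ℝ H] {N : ℕ}
    (x : Fin N → H) : ℝ :=
  (N : ℝ)⁻¹ * ∑ i, ‖x i - (N : ℝ)⁻¹ • ∑ j, x j‖ ^ 2

/-- In-degree `d_i⁺ = #{h : (h,i) ∈ E}` of node `i`. -/
def inDeg {N : ℕ} (E : Finset (Fin N × Fin N)) (i : Fin N) : ℕ :=
  (Finset.univ.filter (fun h => (h, i) ∈ E)).card

/-- Out-degree `d_i⁻ = #{h : (i,h) ∈ E}` of node `i`. -/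
def outDeg {N : ℕ} (E : Finset (Fin N × Fin N)) (i : Fin N) : ℕ :=
  (Finset.univ.filter (fun h => (i, h) ∈ E)).card

/-- The unbalance `U_G = sqrt((1/N) ∑_i (d_i⁻ − d_i⁺)²)` of the state graph. -/
def unbalance {N : ℕ} (E : Finset (Fin N × Fin N)) : ℝ :=
  Real.sqrt ((N : ℝ)⁻¹ * ∑ i, ((outDeg E i : ℝ) - (inDeg E i : ℝ)) ^ 2)

end

noncomputable section

/-- The inner product on the product space `H^N × H^M`. -/
def innProd {H : Type*} [NormedAddCommGroup H] [InnerProductSpace ℝ H] {N M : ℕ}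
    (p q : (Fin N → H) × (Fin M → H)) : ℝ :=
  (∑ i, ⟪p.1 i, q.1 i⟫_ℝ) + ∑ j, ⟪p.2 j, q.2 j⟫_ℝ

/-- Maximal monotonicity of a set-valued operator with respect to an explicitly given
inner product `inn`. -/
def IsMaxMonoWith {K : Type*} [AddCommGroup K] (inn : K → K → ℝ) (A : K → Set K) : Prop :=
  (∀ x y u v : K, u ∈ A x → v ∈ A y → 0 ≤ inn (u - v) (x - y)) ∧
  (∀ x u : K, (∀ y v : K, v ∈ A y → 0 ≤ inn (u - v) (x - y)) → u ∈ A x)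

/-- The set-valued operator `𝒜` on `H^N × H^{N−1}`:
`(y, z) ∈ 𝒜(x, v)` iff `z = (Zᵀ⊗I)x` and
`y ∈ A_1x_1 × ⋯ × A_Nx_N + ((Σ+P)⊗I)x − (Z⊗I)v`. -/
def opA {H : Type*} [NormedAddCommGroup H] [InnerProductSpace ℝ H] {N : ℕ}
    (A : Fin N → H → Set H) (E E' : Finset (Fin N × Fin N))
    (Z : Matrix (Fin N) (Fin (N - 1)) ℝ) :
    (Fin N → H) × (Fin (N - 1) → H) → Set ((Fin N → H) × (Fin (N - 1) → H)) :=
  fun p =>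
    { q | q.2 = matVecH Z.transpose p.1 ∧
      ∃ b : Fin N → H, (∀ i, b i ∈ A i (p.1 i)) ∧
        q.1 = b + matVecH (sigmaE E' + pE E E') p.1 - matVecH Z p.2 }

end


section Helpers

open Finset

variable {H : Type*} [NormedAddCommGroup H] [InnerProductSpace ℝ H]

lemma matVecH_add {N M : ℕ} (Q R : Matrix (Fin N) (Fin M) ℝ) (x : Fin M → H) :
    matVecH (Q + R) x = matVecH Q x + matVecH R x := by
  funext i
  simp [matVecH, add_smul, Finset.sum_add_distrib, Matrix.add_apply]

lemma matVecH_smul {N M : ℕ} (a : ℝ) (Q : Matrix (Fin N) (Fin M) ℝ) (x : Fin M → H) :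
    matVecH (a • Q) x = a • matVecH Q x := by
  funext i
  show ∑ k, (a • Q) i k • x k = a • ∑ k, Q i k • x k
  rw [Finset.smul_sum]
  refine Finset.sum_congr rfl fun k _ => ?_
  rw [Matrix.smul_apply, smul_eq_mul, mul_smul]

lemma matVecH_mul {N M P : ℕ} (Q : Matrix (Fin N) (Fin M) ℝ) (R : Matrix (Fin M) (Fin P) ℝ)
    (x : Fin P → H) : matVecH (Q * R) x = matVecH Q (matVecH R x) := by
  funext i
  simp only [matVecH, Matrix.mul_apply, Finset.sum_smul, Finset.smul_sum, mul_smul]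
  exact Finset.sum_comm

lemma matVecH_one {N : ℕ} (x : Fin N → H) :
    matVecH (1 : Matrix (Fin N) (Fin N) ℝ) x = x := by
  funext i
  simp [matVecH, Matrix.one_apply]

lemma sum_matVecH {N M : ℕ} (Q : Matrix (Fin N) (Fin M) ℝ) (x : Fin M → H) :
    ∑ i, matVecH Q x i = ∑ k, (∑ i, Q i k) • x k := by
  simp only [matVecH, Finset.sum_smul]
  exact Finset.sum_comm

lemma inner_matVecH {N M : ℕ} (Q : Matrix (Fin N) (Fin M) ℝ) (x : Fin M → H) (h : H) :
    (fun i => ⟪matVecH Q x i, h⟫_ℝ) = Q.mulVec (fun k => ⟪x k, h⟫_ℝ) := by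
  funext i
  simp [matVecH, Matrix.mulVec, dotProduct, sum_inner, real_inner_smul_left]

lemma lapE_symm {N : ℕ} (E' : Finset (Fin N × Fin N)) (i j : Fin N) :
    lapE E' i j = lapE E' j i := by
  by_cases h : i = j
  · subst h; rfl
  · simp [lapE, h, Ne.symm h, or_comm]

lemma sigmaE_skew {N : ℕ} (E' : Finset (Fin N × Fin N)) (i j : Fin N) :
    sigmaE E' i j = -sigmaE E' j i := by
  rcases lt_trichotomy i j with h | h | h
  · simp [sigmaE, h, not_lt_of_gt h, lapE_symm E' i j]
  · simp [sigmaE, h, lt_irrefl]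
  · simp [sigmaE, h, not_lt_of_gt h, lapE_symm E' i j]

lemma total_sigmaE {N : ℕ} (E' : Finset (Fin N × Fin N)) :
    ∑ j : Fin N, ∑ i : Fin N, sigmaE E' i j = 0 := by
  have h : ∑ j : Fin N, ∑ i : Fin N, sigmaE E' i j
      = -∑ j : Fin N, ∑ i : Fin N, sigmaE E' i j := by
    nth_rewrite 1 [Finset.sum_comm]
    rw [← Finset.sum_neg_distrib]
    refine Finset.sum_congr rfl fun j _ => ?_
    rw [← Finset.sum_neg_distrib]
    exact Finset.sum_congr rfl fun i _ => sigmaE_skew E' j i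
  linarith

lemma total_pij {N : ℕ} (i j : Fin N) (hij : i ≠ j) :
    ∑ h : Fin N, ∑ k : Fin N, pijM N i j h k = 0 := by
  have hrw : ∀ h k : Fin N, pijM N i j h k =
      (if h = i then (if k = i then (1:ℝ) else 0) else 0)
      + (if h = j then (if k = j then (1:ℝ) else 0) else 0)
      + (if h = j then (if k = i then (-2:ℝ) else 0) else 0) := by
    intro h k
    unfold pijM
    by_cases h1 : h = i <;> by_cases h2 : h = j <;> by_cases h3 : k = i <;>
      by_cases h4 : k = j <;> simp_all <;> norm_num
  simp only [hrw, Finset.sum_add_distrib, Finset.sum_ite_eq', Finset.mem_univ, if_true]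
  simp [Finset.sum_ite_eq']
  norm_num

lemma total_pE {N : ℕ} (E E' : Finset (Fin N × Fin N)) (hbi : IsBilevel E E') :
    ∑ j : Fin N, ∑ i : Fin N, pE E E' i j = 0 := by
  have key : ∀ e ∈ E \ E', ∑ j : Fin N, ∑ i : Fin N, pijM N e.1 e.2 i j = 0 := by
    intro e he
    have h := hbi.topo e (Finset.mem_sdiff.mp he).1
    rw [Finset.sum_comm]
    exact total_pij e.1 e.2 (ne_of_lt h)
  calc ∑ j : Fin N, ∑ i : Fin N, pE E E' i j
      = ∑ j : Fin N, ∑ i : Fin N, ∑ e ∈ E \ E', pijM N e.1 e.2 i j := by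
        simp [pE, Matrix.sum_apply]
    _ = ∑ j : Fin N, ∑ e ∈ E \ E', ∑ i : Fin N, pijM N e.1 e.2 i j :=
        Finset.sum_congr rfl fun j _ => Finset.sum_comm
    _ = ∑ e ∈ E \ E', ∑ j : Fin N, ∑ i : Fin N, pijM N e.1 e.2 i j := Finset.sum_comm
    _ = 0 := Finset.sum_eq_zero key

lemma total_SP {N : ℕ} (E E' : Finset (Fin N × Fin N)) (hbi : IsBilevel E E') :
    ∑ j : Fin N, ∑ i : Fin N, (sigmaE E' + pE E E') i j = 0 := by
  simp only [Matrix.add_apply, Finset.sum_add_distrib, total_sigmaE, total_pE E E' hbi]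
  norm_num

end Helpers

/-- **Theorem 3.3, zero characterization part.** `(0,0) ∈ 𝒜((x_1,…,x_N), v)` for
some `v ∈ H^{N−1}` if and only if `x_1 = ⋯ = x_N` and the common point solves
`0 ∈ (A_1 + ⋯ + A_N)x`. -/
theorem opA_zeros
    {H : Type*} [NormedAddCommGroup H] [InnerProductSpace ℝ H] [CompleteSpace H]
    (N : ℕ) (hN : 2 ≤ N) (E E' : Finset (Fin N × Fin N)) (hbi : IsBilevel E E')
    (Z : Matrix (Fin N) (Fin (N - 1)) ℝ) (hZ : ZOnto E' Z)
    (A : Fin N → H → Set H) (hA : ∀ i, IsMaxMonotone (A i))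
    (hzer : SumZerNonempty A) (x : Fin N → H) :
    (∃ v : Fin (N - 1) → H,
        ((0, 0) : (Fin N → H) × (Fin (N - 1) → H)) ∈ opA A E E' Z (x, v)) ↔
    ((∀ i j : Fin N, x i = x j) ∧
      ∃ b : Fin N → H, (∀ i, b i ∈ A i (x ⟨0, by omega⟩)) ∧ ∑ i, b i = 0) := by
  have hN0 : 0 < N := by omega
  have hNne : (N:ℝ) ≠ 0 := Nat.cast_ne_zero.mpr (by omega)
  have hZ1 : Z.transpose.mulVec (fun _ => (1:ℝ)) = 0 := (hZ.2 _).mpr ⟨1, rfl⟩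
  have colZ : ∀ k, ∑ i, Z i k = 0 := by
    intro k
    have h := congrFun hZ1 k
    simpa [Matrix.mulVec, dotProduct, Matrix.transpose_apply] using h
  have total := total_SP E E' hbi
  have hSP : (∀ i j, x i = x j) → ∑ i, matVecH (sigmaE E' + pE E E') x i = 0 := by
    intro hc
    rw [sum_matVecH]
    calc ∑ k, (∑ i, (sigmaE E' + pE E E') i k) • x k
        = ∑ k, (∑ i, (sigmaE E' + pE E E') i k) • x ⟨0, hN0⟩ :=
          Finset.sum_congr rfl fun k _ => by rw [hc k ⟨0, hN0⟩]
      _ = (∑ k, ∑ i, (sigmaE E' + pE E E') i k) • x ⟨0, hN0⟩ := by rw [Finset.sum_smul]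
      _ = 0 := by rw [total, zero_smul]
  have hZsum : ∀ v : Fin (N-1) → H, ∑ i, matVecH Z v i = 0 := by
    intro v
    rw [sum_matVecH]
    exact Finset.sum_eq_zero fun k _ => by rw [colZ k, zero_smul]
  constructor
  · rintro ⟨v, hz, b, hb, he⟩
    have hz' : matVecH Z.transpose x = 0 := hz.symm
    have hcon : ∀ i j, x i = x j := by
      intro i j
      have key : ∀ h : H, ⟪x i, h⟫_ℝ = ⟪x j, h⟫_ℝ := by
        intro h
        have h0 : Z.transpose.mulVec (fun k => ⟪x k, h⟫_ℝ) = 0 := by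
          rw [← inner_matVecH]
          funext k
          rw [hz']
          simp
        obtain ⟨c, hcc⟩ := (hZ.2 _).mp h0
        have hi := congrFun hcc i
        have hj := congrFun hcc j
        rw [hi, hj]
      have h2 : ⟪x i - x j, x i - x j⟫_ℝ = 0 := by
        rw [inner_sub_left, key (x i - x j), sub_self]
      exact sub_eq_zero.mp (inner_self_eq_zero.mp h2)
    refine ⟨hcon, b, fun i => ?_, ?_⟩
    · rw [← hcon i ⟨0, hN0⟩]; exact hb i
    · have hsum0 := congrArg (fun f : Fin N → H => ∑ i, f i) he
      simp only [Pi.add_apply, Pi.sub_apply, Finset.sum_add_distrib,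
        Finset.sum_sub_distrib, Finset.sum_const_zero, Pi.zero_apply, hSP hcon, hZsum v,
        add_zero, sub_zero] at hsum0
      exact hsum0.symm
  · rintro ⟨hcon, b, hb, hsum⟩
    set c : Fin N → H := b + matVecH (sigmaE E' + pE E E') x with hc
    have hsc : ∑ i, c i = 0 := by
      simp only [hc, Pi.add_apply, Finset.sum_add_distrib, hsum, hSP hcon, add_zero]
    set L := lapE E' with hL
    set J : Matrix (Fin N) (Fin N) ℝ := fun _ _ => 1 with hJ
    set M := L + (N:ℝ)⁻¹ • J with hM
    have colL : ∀ j, ∑ i, L i j = 0 := by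
      intro j
      rw [hL, ← hZ.1]
      simp only [Matrix.mul_apply, Matrix.transpose_apply]
      rw [Finset.sum_comm]
      simp [← Finset.sum_mul, colZ]
    have colM : ∀ j, ∑ i, M i j = 1 := by
      intro j
      have : ∀ i : Fin N, M i j = L i j + (N:ℝ)⁻¹ := by
        intro i
        simp [hM, hJ, Matrix.add_apply, Matrix.smul_apply, Pi.smul_apply]
        exact mul_one _
      rw [Finset.sum_congr rfl fun i _ => this i, Finset.sum_add_distrib, colL j,
        Finset.sum_const, Finset.card_univ, Fintype.card_fin, zero_add, nsmul_eq_mul]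
      field_simp
    have hker : ∀ w : Fin N → ℝ, M.mulVec w = 0 → w = 0 := by
      intro w hw
      have hLpart : dotProduct w (L.mulVec w) = ∑ k, (Z.transpose.mulVec w k) ^ 2 := by
        rw [hL, ← hZ.1, ← Matrix.mulVec_mulVec, Matrix.dotProduct_mulVec,
          ← Matrix.mulVec_transpose]
        simp [dotProduct, sq]
      have hJpart : dotProduct w (J.mulVec w) = (∑ i, w i) ^ 2 := by
        simp only [hJ, Matrix.mulVec, dotProduct, one_mul, sq]
        rw [← Finset.sum_mul]
      have hq : (0:ℝ) = ∑ k, (Z.transpose.mulVec w k) ^ 2 + (N:ℝ)⁻¹ * (∑ i, w i) ^ 2 := by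
        have h0 : dotProduct w (M.mulVec w) = 0 := by rw [hw]; simp
        rw [hM, Matrix.add_mulVec, dotProduct_add, Matrix.smul_mulVec,
          dotProduct_smul, hLpart, hJpart] at h0
        rw [← h0]
        simp
      have h1 : (0:ℝ) ≤ ∑ k, (Z.transpose.mulVec w k) ^ 2 :=
        Finset.sum_nonneg fun k _ => sq_nonneg _
      have h2 : (0:ℝ) ≤ (N:ℝ)⁻¹ * (∑ i, w i) ^ 2 := by positivity
      have hsq : ∑ k, (Z.transpose.mulVec w k) ^ 2 = 0 := by linarith
      have hws : (∑ i, w i) = 0 := by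
        have hNpos : (0:ℝ) < (N:ℝ)⁻¹ := by positivity
        have : ((∑ i, w i) ^ 2) = 0 := by
          nlinarith
        exact sq_eq_zero_iff.mp this
      have hu : Z.transpose.mulVec w = 0 := by
        funext k
        have := (Finset.sum_eq_zero_iff_of_nonneg fun k _ => sq_nonneg
          (Z.transpose.mulVec w k)).mp hsq k (Finset.mem_univ k)
        exact sq_eq_zero_iff.mp this
      obtain ⟨cw, hcw⟩ := (hZ.2 w).mp hu
      have : cw = 0 := by
        have : ∑ _i : Fin N, cw = 0 := by rw [← hws, hcw]
        rw [Finset.sum_const, Finset.card_univ, Fintype.card_fin, nsmul_eq_mul] at this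
        exact (mul_eq_zero.mp this).resolve_left hNne
      rw [hcw, this]
      funext i; rfl
    have hdet : IsUnit M.det := by
      refine isUnit_iff_ne_zero.mpr fun h0 => ?_
      obtain ⟨w, hwne, hw⟩ := (Matrix.exists_mulVec_eq_zero_iff).mpr h0
      exact hwne (hker w hw)
    have hMM : M * M⁻¹ = 1 := Matrix.mul_nonsing_inv M hdet
    have colMinv : ∀ j, ∑ i, M⁻¹ i j = 1 := by
      intro j
      have h1 : Matrix.vecMul (fun _ => (1:ℝ)) M = fun _ => 1 := by
        funext j'
        simpa [Matrix.vecMul, dotProduct] using colM j'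
      have h2 : Matrix.vecMul (fun _ => (1:ℝ)) M⁻¹ = fun _ => 1 := by
        calc Matrix.vecMul (fun _ => (1:ℝ)) M⁻¹
            = Matrix.vecMul (Matrix.vecMul (fun _ => (1:ℝ)) M) M⁻¹ := by rw [h1]
          _ = Matrix.vecMul (fun _ => (1:ℝ)) (M * M⁻¹) := Matrix.vecMul_vecMul _ M M⁻¹
          _ = fun _ => 1 := by rw [hMM, Matrix.vecMul_one]
      have := congrFun h2 j
      simpa [Matrix.vecMul, dotProduct] using this
    set y : Fin N → H := matVecH M⁻¹ c with hy
    have hysum : ∑ i, y i = 0 := by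
      rw [hy, sum_matVecH]
      calc ∑ k, (∑ i, M⁻¹ i k) • c k
          = ∑ k, c k := Finset.sum_congr rfl fun k _ => by rw [colMinv k, one_smul]
        _ = 0 := hsc
    have hMy : matVecH M y = c := by rw [hy, ← matVecH_mul, hMM, matVecH_one]
    have hJy : matVecH J y = 0 := by
      funext i
      show ∑ k, J i k • y k = 0
      simp only [hJ, one_smul]
      exact hysum
    have hLy : matVecH L y = c := by
      have hadd := matVecH_add L ((N:ℝ)⁻¹ • J) y
      rw [matVecH_smul, hJy, smul_zero, add_zero, ← hM, hMy] at hadd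
      exact hadd.symm
    have hZv : matVecH Z (matVecH Z.transpose y) = c := by
      rw [← matVecH_mul, hZ.1, ← hL, hLy]
    refine ⟨matVecH Z.transpose y, ?_, b, fun i => ?_, ?_⟩
    · show (0 : Fin (N-1) → H) = matVecH Z.transpose x
      symm
      funext k
      show ∑ i, Z.transpose k i • x i = 0
      calc ∑ i, Z.transpose k i • x i
          = ∑ i, Z i k • x ⟨0, hN0⟩ :=
            Finset.sum_congr rfl fun i _ => by rw [Matrix.transpose_apply, hcon i ⟨0, hN0⟩]
        _ = (∑ i, Z i k) • x ⟨0, hN0⟩ := (Finset.sum_smul).symm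
        _ = 0 := by rw [colZ k, zero_smul]
    · show b i ∈ A i (x i)
      rw [hcon i ⟨0, hN0⟩]
      exact hb i
    · show (0 : Fin N → H) = b + matVecH (sigmaE E' + pE E E') x - matVecH Z (matVecH Z.transpose y)
      rw [hZv, hc]
      abel
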